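/- Let G be a real special 2-group with quadratic map q : V → W and normal 2-cocycle c representing q. For a nonzero linear map s : W → F₂ with induced regular quadratic form q_s on V_s = V/rad(s∘b_q) represented by normal 2-cocycle c_s, there exists a map λ : V → F₂ with λ(0) = 0 such that for all v, v' ∈ V: c_s(ε(v), ε(v')) = s(c(v,v')) - λ(v+v') + λ(v) + λ(v'), where ε : V → V_s is the quotient map. Consequently, for each linear map t : rad(s∘b_q) → F₂ extended to h : V → F₂ via a chosen complement, the map f(v,w) = (ε(v), s(w) - λ(v) - h(v)) is a surjective group homomorphism from G (with multiplication via c) onto the extraspecial group G_s (with multiplication via c_s). -/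

import Mathlib

structure Ext2Aux (V : Type*) where
  fst : V
  snd : ZMod 2

theorem exists_coboundary_aux {V : Type*} [AddCommGroup V] [Module (ZMod 2) V]
    (d : V → V → ZMod 2)
    (hco : ∀ a b e : V, d b e - d (a + b) e + d a (b + e) - d a b = 0)
    (hnr : ∀ v, d v 0 = 0) (hnl : ∀ v, d 0 v = 0) (hdiag : ∀ v, d v v = 0) :
    ∃ lam : V → ZMod 2, lam 0 = 0 ∧ ∀ v v', lam (v + v') = d v v' + lam v + lam v' := by
  have h2 : ∀ x : ZMod 2, x + x = 0 := by decide
  have hV : ∀ v : V, v + v = 0 := by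
    intro v
    have := two_smul (ZMod 2) v
    rw [show (2 : ZMod 2) = 0 by decide, zero_smul] at this
    exact this.symm
  have hsymm : ∀ v v' : V, d v v' = d v' v := by
    intro v v'
    have h1 := hco v v v'
    rw [hV v, hnl, hdiag] at h1
    have h3 := hco v' v (v + v')
    rw [add_comm v' v, hdiag,
      show v + (v + v') = v' by rw [← add_assoc, hV, zero_add], hdiag] at h3
    linear_combination h1 - h3 - h2 (d v' v)
  letI : Zero (Ext2Aux V) := ⟨⟨0, 0⟩⟩
  letI : Add (Ext2Aux V) := ⟨fun p q => ⟨p.fst + q.fst, d p.fst q.fst + p.snd + q.snd⟩⟩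
  letI : Neg (Ext2Aux V) := ⟨fun p => p⟩
  letI instE : AddCommGroup (Ext2Aux V) :=
  { add := (· + ·)
    zero := 0
    neg := Neg.neg
    nsmul := nsmulRec
    zsmul := zsmulRec
    add_assoc := by
      rintro ⟨a1, a2⟩ ⟨b1, b2⟩ ⟨c1, c2⟩
      show Ext2Aux.mk (a1 + b1 + c1) (d (a1 + b1) c1 + (d a1 b1 + a2 + b2) + c2)
        = Ext2Aux.mk (a1 + (b1 + c1)) (d a1 (b1 + c1) + a2 + (d b1 c1 + b2 + c2))
      simp only [Ext2Aux.mk.injEq]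
      refine ⟨add_assoc _ _ _, ?_⟩
      linear_combination -hco a1 b1 c1
    zero_add := by
      rintro ⟨a1, a2⟩
      show Ext2Aux.mk (0 + a1) (d 0 a1 + 0 + a2) = Ext2Aux.mk a1 a2
      simp [hnl]
    add_zero := by
      rintro ⟨a1, a2⟩
      show Ext2Aux.mk (a1 + 0) (d a1 0 + a2 + 0) = Ext2Aux.mk a1 a2
      simp [hnr]
    add_comm := by
      rintro ⟨a1, a2⟩ ⟨b1, b2⟩
      show Ext2Aux.mk (a1 + b1) (d a1 b1 + a2 + b2) = Ext2Aux.mk (b1 + a1) (d b1 a1 + b2 + a2)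
      simp only [Ext2Aux.mk.injEq]
      exact ⟨add_comm _ _, by rw [hsymm a1 b1]; ring⟩
    neg_add_cancel := by
      rintro ⟨a1, a2⟩
      show Ext2Aux.mk (a1 + a1) (d a1 a1 + a2 + a2) = Ext2Aux.mk 0 0
      simp only [Ext2Aux.mk.injEq]
      exact ⟨hV a1, by rw [hdiag]; simpa using h2 a2⟩ }
  letI : Module (ZMod 2) (Ext2Aux V) := AddCommGroup.zmodModule (n := 2) (by
    rintro ⟨x1, x2⟩
    rw [two_nsmul]
    show Ext2Aux.mk (x1 + x1) (d x1 x1 + x2 + x2) = Ext2Aux.mk 0 0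
    simp only [Ext2Aux.mk.injEq]
    exact ⟨hV x1, by rw [hdiag]; simpa using h2 x2⟩)
  let π : Ext2Aux V →+ V :=
  { toFun := Ext2Aux.fst
    map_zero' := rfl
    map_add' := fun _ _ => rfl }
  let πl : Ext2Aux V →ₗ[ZMod 2] V := π.toZModLinearMap 2
  have hsurj : LinearMap.range πl = ⊤ := by
    rw [LinearMap.range_eq_top]
    exact fun v => ⟨⟨v, 0⟩, rfl⟩
  obtain ⟨σ, hσ⟩ := πl.exists_rightInverse_of_surjective hsurj
  have hfst : ∀ v : V, (σ v).fst = v := fun v => congrFun (congrArg DFunLike.coe hσ) v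
  refine ⟨fun v => (σ v).snd, ?_, ?_⟩
  · show (σ 0).snd = 0
    rw [map_zero]; rfl
  · intro v v'
    have hm : σ (v + v') = σ v + σ v' := σ.map_add v v'
    have h1 := congrArg Ext2Aux.snd hm
    have h1' : (σ v + σ v').snd = d (σ v).fst (σ v').fst + (σ v).snd + (σ v').snd := rfl
    rw [h1', hfst v, hfst v'] at h1
    exact h1


/-- Let `G` be a real special 2-group realised on `V × W` by a normal 2-cocycle
`c` with `c(v,v) = q(v)`, where `q : V → W` is the associated quadratic map with
polar map `Bq`.  For a nonzero linear `s : W → F₂`, let `rad = ker(s∘b_q)`,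
`V_s = V/rad`, and let `q_s` (with `q_s(ε v) = s(q v)`) be represented by a
normal 2-cocycle `c_s` on `V_s`.  Then there is `λ : V → F₂` with `λ(0) = 0` and
`c_s(ε v, ε v') = s(c(v,v')) - λ(v+v') + λ(v) + λ(v')`, and consequently for
every linear `t : rad → F₂` extended to a linear `h : V → F₂` vanishing on a
chosen complement of `rad`, the map `f(v,w) = (ε v, s(w) - λ(v) - h(v))` is a
surjective homomorphism from `G` (multiplication via `c`) onto the extraspecial
group `G_s` (multiplication via `c_s`). -/
theorem exists_lambda_and_surjective_homs
    (V W : Type*) [AddCommGroup V] [Module (ZMod 2) V] [AddCommGroup W] [Module (ZMod 2) W]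
    [FiniteDimensional (ZMod 2) V] [FiniteDimensional (ZMod 2) W]
    (c : V → V → W)
    (hcocycle : ∀ v₁ v₂ v₃ : V,
      c v₂ v₃ - c (v₁ + v₂) v₃ + c v₁ (v₂ + v₃) - c v₁ v₂ = 0)
    (hnorm_right : ∀ v : V, c v 0 = 0) (hnorm_left : ∀ v : V, c 0 v = 0)
    (q : V → W) (hq : ∀ v : V, q v = c v v)
    (Bq : V →ₗ[ZMod 2] V →ₗ[ZMod 2] W)
    (hBq : ∀ v w : V, Bq v w = q (v + w) - q v - q w)
    (hreal : ∀ v : V, ∃ v' : V, q v' = q (v + v'))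
    (s : W →ₗ[ZMod 2] ZMod 2) (hs : s ≠ 0)
    (qs : (V ⧸ LinearMap.ker (Bq.compr₂ s)) → ZMod 2)
    (hqs : ∀ v : V, qs (Submodule.Quotient.mk v) = s (q v))
    (cs : (V ⧸ LinearMap.ker (Bq.compr₂ s)) → (V ⧸ LinearMap.ker (Bq.compr₂ s)) → ZMod 2)
    (hcs_cocycle : ∀ u₁ u₂ u₃,
      cs u₂ u₃ - cs (u₁ + u₂) u₃ + cs u₁ (u₂ + u₃) - cs u₁ u₂ = 0)
    (hcs_norm_right : ∀ u, cs u 0 = 0) (hcs_norm_left : ∀ u, cs 0 u = 0)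
    (hcs_diag : ∀ u, cs u u = qs u) :
    ∃ lam : V → ZMod 2, lam 0 = 0 ∧
      (∀ v v' : V,
        cs (Submodule.Quotient.mk v) (Submodule.Quotient.mk v') =
          s (c v v') - lam (v + v') + lam v + lam v') ∧
      (∀ (V' : Submodule (ZMod 2) V), IsCompl (LinearMap.ker (Bq.compr₂ s)) V' →
        ∀ (t : ↥(LinearMap.ker (Bq.compr₂ s)) →ₗ[ZMod 2] ZMod 2)
          (h : V →ₗ[ZMod 2] ZMod 2),
          (∀ x : ↥(LinearMap.ker (Bq.compr₂ s)), h (x : V) = t x) →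
          (∀ x ∈ V', h x = 0) →
          ∃ f : V × W → (V ⧸ LinearMap.ker (Bq.compr₂ s)) × ZMod 2,
            (∀ p : V × W,
              f p = (Submodule.Quotient.mk p.1, s p.2 - lam p.1 - h p.1)) ∧
            Function.Surjective f ∧
            (∀ p p' : V × W,
              f (p.1 + p'.1, c p.1 p'.1 + p.2 + p'.2) =
                ((f p).1 + (f p').1, cs (f p).1 (f p').1 + (f p).2 + (f p').2))) := by
  classical
  have h2 : ∀ x : ZMod 2, x + x = 0 := by decide
  let mk : V → V ⧸ LinearMap.ker (Bq.compr₂ s) := Submodule.Quotient.mk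
  have mk_add : ∀ v v' : V, mk (v + v') = mk v + mk v' := fun _ _ => rfl
  have mk_zero : (mk 0 : V ⧸ LinearMap.ker (Bq.compr₂ s)) = 0 := rfl
  -- the difference cocycle
  set d : V → V → ZMod 2 := fun v v' => cs (mk v) (mk v') - s (c v v') with hd
  have hdco : ∀ a b e : V, d b e - d (a + b) e + d a (b + e) - d a b = 0 := by
    intro a b e
    have h1 := hcs_cocycle (mk a) (mk b) (mk e)
    have h4 := congrArg s (hcocycle a b e)
    rw [map_sub, map_add, map_sub, map_zero] at h4
    simp only [hd, mk_add]
    linear_combination h1 - h4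
  have hdnr : ∀ v, d v 0 = 0 := by
    intro v
    simp only [hd, mk_zero, hcs_norm_right, hnorm_right, map_zero, sub_zero]
  have hdnl : ∀ v, d 0 v = 0 := by
    intro v
    simp only [hd, mk_zero, hcs_norm_left, hnorm_left, map_zero, zero_sub, neg_zero]
  have hdiag : ∀ v, d v v = 0 := by
    intro v
    simp only [hd, hcs_diag, hqs, hq, sub_self]
    rw [show qs (mk v) = s (c v v) by rw [← hq]; exact hqs v, sub_self]
  obtain ⟨lam, hlam0, hlam⟩ := exists_coboundary_aux d hdco hdnr hdnl hdiag
  have hcob : ∀ v v' : V,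
      cs (mk v) (mk v') = s (c v v') - lam (v + v') + lam v + lam v' := by
    intro v v'
    have hk := hlam v v'
    have hdvv : d v v' = cs (mk v) (mk v') - s (c v v') := rfl
    rw [hdvv] at hk
    linear_combination hk + h2 (cs (mk v) (mk v')) - h2 (s (c v v'))
  refine ⟨lam, hlam0, hcob, ?_⟩
  intro V' hcompl t h ht hV'
  refine ⟨fun p => (mk p.1, s p.2 - lam p.1 - h p.1), fun p => rfl, ?_, ?_⟩
  · rintro ⟨u, a⟩
    obtain ⟨v, rfl⟩ := Submodule.Quotient.mk_surjective (LinearMap.ker (Bq.compr₂ s)) u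
    obtain ⟨w0, hw0⟩ : ∃ w0, s w0 ≠ 0 := by
      by_contra hc
      push_neg at hc
      exact hs (by ext w; simpa using hc w)
    have hw1 : s w0 = 1 := (by decide : ∀ x : ZMod 2, x ≠ 0 → x = 1) _ hw0
    refine ⟨(v, (a + lam v + h v) • w0), ?_⟩
    simp only [Prod.mk.injEq]
    refine ⟨rfl, ?_⟩
    rw [map_smul, hw1]
    simp only [smul_eq_mul, mul_one]
    ring
  · intro p p'
    simp only [Prod.mk.injEq]
    refine ⟨mk_add _ _, ?_⟩
    rw [hcob p.1 p'.1, map_add, map_add, map_add]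
    ring
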